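/- For λ ∈ ℝ, with γ = (1-λ)/(1+λ²) and δ = 1/(1+λ²), the 6×6 matrix P₄ with nonzero entries P₄(1,4)=P₄(4,1)=P₄(3,6)=P₄(6,3)=γ, P₄(2,3)=P₄(3,2)=P₄(2,5)=P₄(5,2)=P₄(4,5)=P₄(5,4)=δ, P₄(3,4)=P₄(4,3)=1, satisfies H(λ)ᵀ P₄ = P₄ H(λ) with the 6×6 discrete square-well Hamiltonian H(λ). -/

import Mathlib

open Matrix Polynomial

/-- The N×N discrete PT-symmetric square-well Hamiltonian (0-indexed). -/
noncomputable def Ham (N : ℕ) (l : ℝ) : Matrix (Fin N) (Fin N) ℝ :=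
  Matrix.of fun i j =>
    if (i : ℕ) = j then 2
    else if (j : ℕ) = (i : ℕ) + 1 then
      (if (i : ℕ) = 0 then -1 - l else if (j : ℕ) = N - 1 then -1 + l else -1)
    else if (i : ℕ) = (j : ℕ) + 1 then
      (if (j : ℕ) = 0 then -1 + l else if (i : ℕ) = N - 1 then -1 - l else -1)
    else 0

/-- The pseudometric P₄ for N = 6, with γ = (1-λ)/(1+λ²), δ = 1/(1+λ²). -/
noncomputable def P4 (l : ℝ) : Matrix (Fin 6) (Fin 6) ℝ :=
  let γ := (1 - l) / (1 + l ^ 2)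
  let δ := 1 / (1 + l ^ 2)
  !![0, 0, 0, γ, 0, 0;
     0, 0, δ, 0, δ, 0;
     0, δ, 0, 1, 0, γ;
     γ, 0, 1, 0, δ, 0;
     0, δ, 0, δ, 0, 0;
     0, 0, γ, 0, 0, 0]

section vec6
variable {α : Type*} (a b c d e f : α)
@[simp] lemma vec6_0 : ![a,b,c,d,e,f] 0 = a := rfl
@[simp] lemma vec6_1 : ![a,b,c,d,e,f] 1 = b := rfl
@[simp] lemma vec6_2 : ![a,b,c,d,e,f] 2 = c := rfl
@[simp] lemma vec6_3 : ![a,b,c,d,e,f] 3 = d := rfl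
@[simp] lemma vec6_4 : ![a,b,c,d,e,f] 4 = e := rfl
@[simp] lemma vec6_5 : ![a,b,c,d,e,f] 5 = f := rfl
end vec6

lemma Ham6 (l : ℝ) : Ham 6 l =
    !![2, -1 - l, 0, 0, 0, 0;
       -1 + l, 2, -1, 0, 0, 0;
       0, -1, 2, -1, 0, 0;
       0, 0, -1, 2, -1, 0;
       0, 0, 0, -1, 2, -1 + l;
       0, 0, 0, 0, -1 - l, 2] := by
  ext i j
  fin_cases i <;> fin_cases j <;> rfl

lemma P4eq (l : ℝ) : P4 l =
    !![0, 0, 0, (1 - l) / (1 + l ^ 2), 0, 0;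
       0, 0, 1 / (1 + l ^ 2), 0, 1 / (1 + l ^ 2), 0;
       0, 1 / (1 + l ^ 2), 0, 1, 0, (1 - l) / (1 + l ^ 2);
       (1 - l) / (1 + l ^ 2), 0, 1, 0, 1 / (1 + l ^ 2), 0;
       0, 1 / (1 + l ^ 2), 0, 1 / (1 + l ^ 2), 0, 0;
       0, 0, (1 - l) / (1 + l ^ 2), 0, 0, 0] := rfl

set_option maxHeartbeats 2000000 in
theorem stmt15 (l : ℝ) : (Ham 6 l)ᵀ * P4 l = P4 l * Ham 6 l := by
  have h : (1 : ℝ) + l ^ 2 ≠ 0 := by positivity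
  rw [Ham6, P4eq]
  ext i j
  fin_cases i <;> fin_cases j <;>
    simp only [Matrix.mul_apply, Fin.sum_univ_six, Matrix.transpose_apply,
      Matrix.of_apply, Fin.mk_zero', Fin.mk_one, Fin.reduceFinMk, Fin.isValue, vec6_0, vec6_1, vec6_2, vec6_3, vec6_4, vec6_5] <;>
    field_simp <;> ring
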